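/- The group with presentation ⟨x, y, z ∣ x², y², z², (xy)³, (xz)³, (yz)³, (xzyz)⁴⟩ has order 96. -/

import Mathlib

namespace G2

def x : FreeGroup (Fin 3) := FreeGroup.of 0
def y : FreeGroup (Fin 3) := FreeGroup.of 1
def z : FreeGroup (Fin 3) := FreeGroup.of 2

/-- Relators of the presentation ⟨x, y, z ∣ x², y², z², (xy)³, (xz)³, (yz)³, (xzyz)⁴⟩. -/
def rels : Set (FreeGroup (Fin 3)) :=
  {x ^ 2, y ^ 2, z ^ 2, (x * y) ^ 3, (x * z) ^ 3, (y * z) ^ 3, (x * z * y * z) ^ 4}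



abbrev P := PresentedGroup rels

def X : P := PresentedGroup.of 0
def Y : P := PresentedGroup.of 1
def Z : P := PresentedGroup.of 2

lemma rel_one {r : FreeGroup (Fin 3)} (hr : r ∈ rels) : PresentedGroup.mk rels r = 1 :=
  (QuotientGroup.eq_one_iff r).mpr (Subgroup.subset_normalClosure hr)

lemma hX : X * X = 1 := by
  have := rel_one (show x^2 ∈ rels from Set.mem_insert _ _)
  rwa [sq, map_mul] at this

lemma hY : Y * Y = 1 := by
  have := rel_one (show y^2 ∈ rels from Set.mem_insert_of_mem _ (Set.mem_insert _ _))
  rwa [sq, map_mul] at this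

lemma hZ : Z * Z = 1 := by
  have := rel_one (show z^2 ∈ rels from by right; right; left; rfl)
  rwa [sq, map_mul] at this

lemma rxy3 : (X * Y)^3 = 1 := by
  have := rel_one (show (x*y)^3 ∈ rels from by right; right; right; left; rfl)
  rwa [map_pow, map_mul] at this

lemma rxz3 : (X * Z)^3 = 1 := by
  have := rel_one (show (x*z)^3 ∈ rels from by right; right; right; right; left; rfl)
  rwa [map_pow, map_mul] at this

lemma ryz3 : (Y * Z)^3 = 1 := by
  have := rel_one (show (y*z)^3 ∈ rels from by right; right; right; right; right; left; rfl)
  rwa [map_pow, map_mul] at this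

def A : P := X * Z * Y * Z
def B : P := Y * Z * X * Z

lemma ordA : A^4 = 1 := by
  have := rel_one (show (x*z*y*z)^4 ∈ rels from by right; right; right; right; right; right; rfl)
  rwa [map_pow, map_mul, map_mul, map_mul] at this

lemma invX : X⁻¹ = X := inv_eq_of_mul_eq_one_right hX
lemma invY : Y⁻¹ = Y := inv_eq_of_mul_eq_one_right hY
lemma invZ : Z⁻¹ = Z := inv_eq_of_mul_eq_one_right hZ

lemma tX : ∀ t : P, X * (X * t) = t := fun t => by rw [← mul_assoc, hX, one_mul]
lemma tY : ∀ t : P, Y * (Y * t) = t := fun t => by rw [← mul_assoc, hY, one_mul]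
lemma tZ : ∀ t : P, Z * (Z * t) = t := fun t => by rw [← mul_assoc, hZ, one_mul]

lemma hxyxy : X*Y*X*Y = Y*X := by
  have h2 : (X*Y)^2 = (X*Y)⁻¹ :=
    eq_inv_of_mul_eq_one_left (by rw [← pow_succ]; exact rxy3)
  calc X*Y*X*Y = (X*Y)^2 := by rw [sq]; simp only [mul_assoc]
  _ = Y*X := by rw [h2, mul_inv_rev, invX, invY]

lemma hxzxz : X*Z*X*Z = Z*X := by
  have h2 : (X*Z)^2 = (X*Z)⁻¹ :=
    eq_inv_of_mul_eq_one_left (by rw [← pow_succ]; exact rxz3)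
  calc X*Z*X*Z = (X*Z)^2 := by rw [sq]; simp only [mul_assoc]
  _ = Z*X := by rw [h2, mul_inv_rev, invX, invZ]

lemma hyzyz : Y*Z*Y*Z = Z*Y := by
  have h2 : (Y*Z)^2 = (Y*Z)⁻¹ :=
    eq_inv_of_mul_eq_one_left (by rw [← pow_succ]; exact ryz3)
  calc Y*Z*Y*Z = (Y*Z)^2 := by rw [sq]; simp only [mul_assoc]
  _ = Z*Y := by rw [h2, mul_inv_rev, invY, invZ]

lemma braidXY : X*Y*X = Y*X*Y := by
  have h : X*Y*X*Y*Y = Y*X*Y := by rw [hxyxy]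
  rwa [mul_assoc (X*Y*X), hY, mul_one] at h

lemma braidXZ : X*Z*X = Z*X*Z := by
  have h : X*Z*X*Z*Z = Z*X*Z := by rw [hxzxz]
  rwa [mul_assoc (X*Z*X), hZ, mul_one] at h

lemma braidYZ : Y*Z*Y = Z*Y*Z := by
  have h : Y*Z*Y*Z*Z = Z*Y*Z := by rw [hyzyz]
  rwa [mul_assoc (Y*Z*Y), hZ, mul_one] at h

lemma braidXZ' : X*(Z*X) = Z*(X*Z) := by simp only [← mul_assoc]; rw [braidXZ]
lemma braidYZ' : Y*(Z*Y) = Z*(Y*Z) := by simp only [← mul_assoc]; rw [braidYZ]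
lemma tbXY : ∀ t : P, X*(Y*(X*t)) = Y*(X*(Y*t)) := fun t => by
  simp only [← mul_assoc]; rw [braidXY]
lemma tyzyz : ∀ t : P, Y*(Z*(Y*(Z*t))) = Z*(Y*t) := fun t => by
  simp only [← mul_assoc]; rw [hyzyz]
lemma txzxz : ∀ t : P, X*(Z*(X*(Z*t))) = Z*(X*t) := fun t => by
  simp only [← mul_assoc]; rw [hxzxz]

lemma hA3 : A^3 = Z*(Y*(Z*X)) := by
  have h3 : A^3 = A⁻¹ := eq_inv_of_mul_eq_one_left (by rw [← pow_succ]; exact ordA)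
  rw [h3]
  simp [A, mul_inv_rev, invX, invY, invZ, mul_assoc]

lemma hAB : A*B = X*(Y*(X*Z)) := by
  simp only [A, B, mul_assoc]
  rw [tyzyz]; simp only [tZ]

lemma hBA : B*A = Y*(X*(Y*Z)) := by
  simp only [A, B, mul_assoc]
  rw [txzxz]; simp only [tZ]

lemma commAB : A*B = B*A := by
  rw [hAB, hBA]
  simp only [← mul_assoc]; rw [braidXY]

lemma hinvB : B⁻¹ = Z*A*Z := by
  simp [A, B, mul_inv_rev, invX, invY, invZ, mul_assoc, hZ, mul_one]

lemma tA4 : ∀ t : P, A*(A*(A*(A*t))) = t := fun t => by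
  simp only [← mul_assoc]
  rw [show A*A*A*A = 1 from by rw [← ordA, pow_succ, pow_succ, sq], one_mul]

lemma ordB : B^4 = 1 := by
  have h4 : (B⁻¹)^4 = 1 := by
    rw [hinvB]
    simp only [pow_succ, pow_zero, one_mul, mul_assoc, tZ, tA4]
    exact hZ
  rwa [inv_pow, inv_eq_one] at h4

lemma hB3 : B^3 = Z*(X*(Z*Y)) := by
  have h3 : B^3 = B⁻¹ := eq_inv_of_mul_eq_one_left (by rw [← pow_succ]; exact ordB)
  rw [h3, hinvB]
  simp [A, mul_assoc, hZ, mul_one]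

lemma cXA : X*A = A^3*X := by
  rw [hA3]
  simp only [A, mul_assoc, tX, hX, mul_one]

lemma cXB : X*B = A*B*X := by
  rw [hAB]
  simp only [B, mul_assoc]
  rw [braidXZ']

lemma cYA : Y*A = A*B*Y := by
  rw [hAB]
  simp only [A, mul_assoc]
  rw [tbXY, braidYZ']

lemma cYB : Y*B = B^3*Y := by
  rw [hB3]
  simp only [B, mul_assoc, tY, hY, mul_one]

lemma cZA : Z*A = B^3*Z := by
  rw [hB3]
  simp only [A, mul_assoc, hZ, mul_one]

lemma cZB : Z*B = A^3*Z := by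
  rw [hA3]
  simp only [B, mul_assoc, hZ, mul_one]

lemma tail {u v w r : P} (h : u*v = w*r) : ∀ t, u*(v*t) = w*(r*t) := fun t => by
  rw [← mul_assoc, h, mul_assoc]

lemma comm_pow {u v w : P} (h : ∀ t, u*(v*t) = w*(u*t)) :
    ∀ (n : ℕ) (t : P), u*(v^n*t) = w^n*(u*t) := by
  intro n
  induction n with
  | zero => intro t; simp
  | succ k ih =>
    intro t
    rw [pow_succ' v k, mul_assoc, h, ih, ← mul_assoc, ← pow_succ' w k]

lemma powA_add : ∀ (m n : ℕ) (t : P), A^m*(A^n*t) = A^(m+n)*t := fun m n t => by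
  rw [← mul_assoc, ← pow_add]

lemma swapBA : ∀ (m n : ℕ) (t : P), B^m*(A^n*t) = A^n*(B^m*t) := fun m n t => by
  rw [← mul_assoc, (((show Commute A B from commAB).symm.pow_pow m n) : B^m*A^n = A^n*B^m), mul_assoc]

def T : Fin 6 → P
  | 0 => 1
  | 1 => X
  | 2 => Y
  | 3 => X*Y
  | 4 => Y*X
  | 5 => X*(Y*X)

def sx : Fin 6 → Fin 6
  | 0 => 1 | 1 => 0 | 2 => 3 | 3 => 2 | 4 => 5 | 5 => 4
def sy : Fin 6 → Fin 6
  | 0 => 2 | 1 => 4 | 2 => 0 | 3 => 5 | 4 => 1 | 5 => 3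
def sz : Fin 6 → Fin 6
  | 0 => 5 | 1 => 3 | 2 => 4 | 3 => 1 | 4 => 2 | 5 => 0

def f : Fin 4 × Fin 4 × Fin 6 → P := fun k => A^(k.1 : ℕ) * (B^(k.2.1 : ℕ) * T k.2.2)

lemma tXA : ∀ t : P, X*(A*t) = A^3*(X*t) := tail cXA
lemma tXB : ∀ t : P, X*(B*t) = (A*B)*(X*t) := tail cXB
lemma tYA : ∀ t : P, Y*(A*t) = (A*B)*(Y*t) := tail cYA
lemma tYB : ∀ t : P, Y*(B*t) = B^3*(Y*t) := tail cYB
lemma tZA : ∀ t : P, Z*(A*t) = B^3*(Z*t) := tail cZA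
lemma tZB : ∀ t : P, Z*(B*t) = A^3*(Z*t) := tail cZB

lemma hXT : ∀ s : Fin 6, X * T s = T (sx s) := by
  intro s
  fin_cases s <;> simp [T, sx, tX, hX, mul_one]

lemma hYT : ∀ s : Fin 6, Y * T s = T (sy s) := by
  intro s
  fin_cases s <;> simp [T, sy, tY, hY, mul_one]
  · simp only [← mul_assoc]; rw [braidXY]
  · simp only [← mul_assoc]; rw [← braidXY, mul_assoc, hX, mul_one]

lemma Xf (i j : Fin 4) (s : Fin 6) :
    X * f (i, j, s) = f (⟨(3*(i:ℕ)+(j:ℕ)) % 4, Nat.mod_lt _ (by norm_num)⟩, j, sx s) := by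
  show X * (A^(i:ℕ) * (B^(j:ℕ) * T s))
      = A^((3*(i:ℕ)+(j:ℕ)) % 4) * (B^(j:ℕ) * T (sx s))
  rw [comm_pow tXA, comm_pow tXB, ← pow_mul, (show Commute A B from commAB).mul_pow,
    mul_assoc, powA_add, pow_eq_pow_mod (3*(i:ℕ)+(j:ℕ)) ordA, hXT s]

lemma Yf (i j : Fin 4) (s : Fin 6) :
    Y * f (i, j, s) = f (i, ⟨((i:ℕ)+3*(j:ℕ)) % 4, Nat.mod_lt _ (by norm_num)⟩, sy s) := by
  show Y * (A^(i:ℕ) * (B^(j:ℕ) * T s))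
      = A^(i:ℕ) * (B^(((i:ℕ)+3*(j:ℕ)) % 4) * T (sy s))
  rw [comm_pow tYA, comm_pow tYB, (show Commute A B from commAB).mul_pow,
    mul_assoc, ← pow_mul, hYT s]
  rw [show ∀ t : P, B^(i:ℕ)*(B^(3*(j:ℕ))*t) = B^((i:ℕ)+3*(j:ℕ))*t from
    fun t => by rw [← mul_assoc, ← pow_add]]
  rw [pow_eq_pow_mod ((i:ℕ)+3*(j:ℕ)) ordB]

lemma tbXZ : ∀ t : P, X*(Z*(X*t)) = Z*(X*(Z*t)) := fun t => by
  simp only [← mul_assoc]; rw [braidXZ]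

lemma hZw : Z = A^3*(B^3*(X*(Y*X))) := by
  rw [hA3, hB3]
  simp only [mul_assoc]
  rw [tbXZ]
  simp only [tZ]
  rw [← tbXY]
  simp only [tX, tY, hX, mul_one]

lemma key5 : ∀ s : Fin 6, X*(Y*(X*T s)) = T (sz s) := by
  intro s
  fin_cases s
  · simp [T, sz, mul_one]
  · simp [T, sz, mul_assoc, hX, tX, mul_one]
  · show X*(Y*(X*Y)) = Y*X
    simp only [← mul_assoc]; rw [hxyxy]
  · simp [T, sz, mul_assoc, hX, hY, tX, tY, mul_one]
  · show X*(Y*(X*(Y*X))) = Y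
    simp only [← mul_assoc]; rw [hxyxy, mul_assoc, hX, mul_one]
  · simp [T, sz, mul_assoc, hX, hY, tX, tY, mul_one]

lemma hZT : ∀ s : Fin 6, Z * T s = A^3*(B^3*T (sz s)) := by
  intro s
  rw [hZw]
  simp only [mul_assoc]
  rw [key5 s]

lemma powB_add : ∀ (m n : ℕ) (t : P), B^m*(B^n*t) = B^(m+n)*t := fun m n t => by
  rw [← mul_assoc, ← pow_add]

lemma Zf (i j : Fin 4) (s : Fin 6) :
    Z * f (i, j, s) = f (⟨(3*(j:ℕ)+3) % 4, Nat.mod_lt _ (by norm_num)⟩,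
      ⟨(3*(i:ℕ)+3) % 4, Nat.mod_lt _ (by norm_num)⟩, sz s) := by
  show Z * (A^(i:ℕ) * (B^(j:ℕ) * T s))
      = A^((3*(j:ℕ)+3) % 4) * (B^((3*(i:ℕ)+3) % 4) * T (sz s))
  rw [comm_pow tZA, comm_pow tZB, ← pow_mul, ← pow_mul, hZT s, powA_add, swapBA, powB_add,
    pow_eq_pow_mod (3*(j:ℕ)+3) ordA, pow_eq_pow_mod (3*(i:ℕ)+3) ordB]

-- Permutation representation on 16 points (cosets of ⟨x,y⟩)
def vx : Fin 16 → Fin 16 := ![0,2,1,4,3,5,14,7,9,8,11,10,13,12,6,15]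
def vy : Fin 16 → Fin 16 := ![0,3,9,1,8,6,5,13,4,2,10,15,12,7,14,11]
def vz : Fin 16 → Fin 16 := ![1,0,2,3,5,4,7,6,13,10,9,12,11,8,14,15]

def px : Equiv.Perm (Fin 16) := ⟨vx, vx, by decide, by decide⟩
def py : Equiv.Perm (Fin 16) := ⟨vy, vy, by decide, by decide⟩
def pz : Equiv.Perm (Fin 16) := ⟨vz, vz, by decide, by decide⟩

def gens : Fin 3 → Equiv.Perm (Fin 16)
  | 0 => px | 1 => py | 2 => pz

lemma hrels : ∀ r ∈ rels, FreeGroup.lift gens r = 1 := by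
  intro r hr
  simp only [rels, Set.mem_insert_iff, Set.mem_singleton_iff] at hr
  rcases hr with h|h|h|h|h|h|h <;> subst h <;>
    simp only [x, y, z, map_pow, map_mul, FreeGroup.lift_apply_of] <;> decide

def φ : P →* Equiv.Perm (Fin 16) := PresentedGroup.toGroup hrels

def pA : Equiv.Perm (Fin 16) := px*pz*py*pz
def pB : Equiv.Perm (Fin 16) := py*pz*px*pz
def pT : Fin 6 → Equiv.Perm (Fin 16)
  | 0 => 1 | 1 => px | 2 => py | 3 => px*py | 4 => py*px | 5 => px*(py*px)

def g0 : Fin 4 × Fin 4 × Fin 6 → Equiv.Perm (Fin 16) :=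
  fun k => pA^(k.1:ℕ) * (pB^(k.2.1:ℕ) * pT k.2.2)

lemma hφX : φ X = px := PresentedGroup.toGroup.of hrels
lemma hφY : φ Y = py := PresentedGroup.toGroup.of hrels
lemma hφZ : φ Z = pz := PresentedGroup.toGroup.of hrels

lemma hφA : φ A = pA := by
  simp only [A, pA, map_mul, hφX, hφY, hφZ]
lemma hφB : φ B = pB := by
  simp only [B, pB, map_mul, hφX, hφY, hφZ]
lemma hφT : ∀ s : Fin 6, φ (T s) = pT s := by
  intro s
  fin_cases s <;> simp only [T, pT, map_mul, map_one, hφX, hφY]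

lemma hcomp : ∀ k, φ (f k) = g0 k := by
  rintro ⟨i, j, s⟩
  simp only [f, g0, map_mul, map_pow, hφA, hφB, hφT]

set_option maxRecDepth 10000 in
lemma hg0inj : Function.Injective g0 := by decide

lemma hfinj : Function.Injective f := by
  have : Function.Injective (φ ∘ f) := by
    have he : φ ∘ f = g0 := funext hcomp
    rw [he]; exact hg0inj
  exact Function.Injective.of_comp this

lemma hfsurj : Function.Surjective f := by
  have h1 : (1 : P) ∈ Set.range f := ⟨(0, 0, 0), by simp [f, T]⟩
  have step : ∀ w : FreeGroup (Fin 3), ∀ q ∈ Set.range f,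
      (PresentedGroup.mk rels w) * q ∈ Set.range f := by
    intro w
    induction w using FreeGroup.induction_on with
    | C1 => intro q hq; simpa using hq
    | of i =>
      intro q hq
      obtain ⟨⟨a, b, s⟩, rfl⟩ := hq
      fin_cases i
      · exact ⟨_, (Xf a b s).symm⟩
      · exact ⟨_, (Yf a b s).symm⟩
      · exact ⟨_, (Zf a b s).symm⟩
    | inv_of i ih =>
      intro q hq
      have hio : (PresentedGroup.mk rels (FreeGroup.of i))⁻¹
          = PresentedGroup.mk rels (FreeGroup.of i) := by
        fin_cases i
        · exact invX
        · exact invY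
        · exact invZ
      rw [map_inv, hio]
      exact ih q hq
    | mul u v hu hv =>
      intro q hq
      rw [map_mul, mul_assoc]
      exact hu _ (hv q hq)
  intro p
  induction p using PresentedGroup.induction_on with
  | H w => simpa using step w 1 h1

instance : Finite P := Finite.of_surjective f hfsurj

theorem card_eq : Nat.card P = 96 := by
  have hb : Nat.card (Fin 4 × Fin 4 × Fin 6) = 96 := by
    simp [Nat.card_eq_fintype_card]
  refine le_antisymm ?_ ?_
  · rw [← hb]; exact Nat.card_le_card_of_surjective f hfsurj
  · rw [← hb]; exact Nat.card_le_card_of_injective f hfinj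

/-- The group ⟨x, y, z ∣ x², y², z², (xy)³, (xz)³, (yz)³, (xzyz)⁴⟩ has order 96. -/
theorem order_eq : Nat.card (PresentedGroup rels) = 96 := by
  exact card_eq

end G2
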